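/- Let x : ℤ → ℤ be a sequence of integers. For every integer i, every integer j with i ≤ j ≤ R_x(i) is a descendant of R_x(i) in the record graph of x (the interval property of the record map). -/
import Mathlib


/-- The record map of an integer-valued sequence `x : ℤ → ℤ`: `recordMap x i` is the least
`n > i` such that `∑_{l=i}^{n-1} x l ≥ 0` if such an `n` exists, and `i` otherwise. -/
noncomputable def recordMap (x : ℤ → ℤ) (i : ℤ) : ℤ := by
  classical
  exact if ∃ n, i < n ∧ 0 ≤ ∑ l ∈ Finset.Ico i n, x l then
    sInf {n : ℤ | i < n ∧ 0 ≤ ∑ l ∈ Finset.Ico i n, x l}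
  else i

lemma recordMap_eq_sInf (x : ℤ → ℤ) (i : ℤ)
    (h : ∃ n, i < n ∧ 0 ≤ ∑ l ∈ Finset.Ico i n, x l) :
    recordMap x i = sInf {n : ℤ | i < n ∧ 0 ≤ ∑ l ∈ Finset.Ico i n, x l} := by
  simp only [recordMap, if_pos h]

lemma recordMap_mem (x : ℤ → ℤ) (i : ℤ)
    (h : ∃ n, i < n ∧ 0 ≤ ∑ l ∈ Finset.Ico i n, x l) :
    i < recordMap x i ∧ 0 ≤ ∑ l ∈ Finset.Ico i (recordMap x i), x l := by
  rw [recordMap_eq_sInf x i h]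
  exact Int.csInf_mem h ⟨i, fun n hn => hn.1.le⟩

lemma recordMap_le (x : ℤ → ℤ) (i n : ℤ) (hn : i < n)
    (hsum : 0 ≤ ∑ l ∈ Finset.Ico i n, x l) : recordMap x i ≤ n := by
  rw [recordMap_eq_sInf x i ⟨n, hn, hsum⟩]
  exact csInf_le ⟨i, fun m hm => hm.1.le⟩ ⟨hn, hsum⟩

/-- Interval property of the record map: every integer `j` with `i ≤ j ≤ R_x(i)` is a
descendant of `R_x(i)` in the record graph of `x`. -/
theorem interval_property (x : ℤ → ℤ) (i j : ℤ) (h1 : i ≤ j) (h2 : j ≤ recordMap x i) :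
    ∃ n : ℕ, (recordMap x)^[n] j = recordMap x i := by
  rcases eq_or_lt_of_le h1 with rfl | hij
  · exact ⟨1, rfl⟩
  -- now i < j ≤ recordMap x i, so recordMap x i > i and the defining set is nonempty
  have hex : ∃ n, i < n ∧ 0 ≤ ∑ l ∈ Finset.Ico i n, x l := by
    by_contra hne
    have : recordMap x i = i := by simp only [recordMap, if_neg hne]
    omega
  obtain ⟨him, hsm⟩ := recordMap_mem x i hex
  set m := recordMap x i with hm
  clear_value m
  -- strong induction on the distance m - j
  have key : ∀ k : ℕ, ∀ j : ℤ, i < j → j ≤ m → m - j ≤ (k : ℤ) →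
      ∃ n : ℕ, (recordMap x)^[n] j = m := by
    intro k
    induction k with
    | zero =>
      intro j hij hjm hk
      have : j = m := by omega
      exact ⟨0, this⟩
    | succ k ih =>
      intro j hij hjm hk
      rcases eq_or_lt_of_le hjm with rfl | hjm'
      · exact ⟨0, rfl⟩
      -- j < m, so ∑ Ico i j < 0 by minimality of m
      have hneg : ∑ l ∈ Finset.Ico i j, x l < 0 := by
        by_contra hpos
        push_neg at hpos
        have := recordMap_le x i j hij hpos
        omega
      have hsplit : ∑ l ∈ Finset.Ico i j, x l + ∑ l ∈ Finset.Ico j m, x l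
          = ∑ l ∈ Finset.Ico i m, x l := by
        rw [← Finset.sum_union (Finset.Ico_disjoint_Ico_consecutive i j m),
          Finset.Ico_union_Ico_eq_Ico hij.le hjm]
      have hjsum : 0 ≤ ∑ l ∈ Finset.Ico j m, x l := by omega
      have hexj : ∃ n, j < n ∧ 0 ≤ ∑ l ∈ Finset.Ico j n, x l := ⟨m, hjm', hjsum⟩
      obtain ⟨hjr, _⟩ := recordMap_mem x j hexj
      have hrle : recordMap x j ≤ m := recordMap_le x j m hjm' hjsum
      obtain ⟨n, hn⟩ := ih (recordMap x j) (hij.trans hjr) hrle (by omega)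
      exact ⟨n + 1, by rw [Function.iterate_succ_apply, hn]⟩
  exact key (m - j).toNat j hij h2 (by omega)
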